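/- Let f : ℝ → ℝ be integrable and square-integrable with f ≥ 0, and suppose there exist constants C > 0 and α > 0 with f(z) ≤ C·exp(-α|z|) for all z. Then the kernel K(x,y) = ∫ f(x-u) f(y-u) du satisfies K(x,y) ≤ C' (1 + |x-y|) exp(-α|x-y|) for some constant C' > 0; in particular K(x,y) → 0 exponentially fast as |x-y| → ∞. -/

import Mathlib

open MeasureTheory Set

lemma my_integral_exp_neg_mul_Ioi {β : ℝ} (hβ : 0 < β) (c : ℝ) :
    ∫ u in Ioi c, Real.exp (-(β * u)) = Real.exp (-(β * c)) / β := by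
  have h := MeasureTheory.integral_comp_mul_left_Ioi (fun x => Real.exp (-x)) c hβ
  simp only [smul_eq_mul] at h
  rw [h, integral_exp_neg_Ioi]
  field_simp

lemma my_integrableOn_exp_mul_Iic {β : ℝ} (hβ : 0 < β) (c : ℝ) :
    IntegrableOn (fun u => Real.exp (β * u)) (Iic c) := by
  have m : MeasurableEmbedding (fun x : ℝ => -x) := (Homeomorph.neg ℝ).measurableEmbedding
  have h := m.integrableOn_map_iff (f := fun u => Real.exp (β * u)) (μ := volume) (s := Iic c)
  rw [Measure.map_neg_eq_self (volume : Measure ℝ)] at h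
  rw [h]
  have base : IntegrableOn (fun x => Real.exp (-β * x)) (Ici (-c)) :=
    Iff.mpr integrableOn_Ici_iff_integrableOn_Ioi (exp_neg_integrableOn_Ioi _ hβ)
  have hset : (fun x : ℝ => -x) ⁻¹' Iic c = Ici (-c) := by
    ext u; simp
  rw [hset]
  refine base.congr_fun ?_ measurableSet_Ici
  intro u _
  simp only [Function.comp]
  ring_nf

lemma my_integral_exp_mul_Iic {β : ℝ} (hβ : 0 < β) (c : ℝ) :
    ∫ u in Iic c, Real.exp (β * u) = Real.exp (β * c) / β := by
  have h := integral_comp_neg_Ioi (-c) (fun u => Real.exp (β * u))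
  rw [neg_neg] at h
  rw [← h]
  have e : ∀ x : ℝ, Real.exp (β * -x) = Real.exp (-(β * x)) := fun x => by ring_nf
  simp_rw [e, my_integral_exp_neg_mul_Ioi hβ]
  ring_nf

theorem gh_kernel_exponential_decay (f : ℝ → ℝ) (hint : Integrable f)
    (hL2 : MemLp f 2 volume) (hpos : ∀ z, 0 ≤ f z)
    (C α : ℝ) (hC : 0 < C) (hα : 0 < α)
    (hdecay : ∀ z, f z ≤ C * Real.exp (-α * |z|))
    (K : ℝ → ℝ → ℝ) (hK : ∀ x y, K x y = ∫ u, f (x - u) * f (y - u)) :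
    ∃ C' > 0, ∀ x y, K x y ≤ C' * (1 + |x - y|) * Real.exp (-α * |x - y|) := by
  have h2α : (0:ℝ) < 2 * α := by linarith
  have main : ∀ x y : ℝ, x ≤ y →
      (∫ u, f (x - u) * f (y - u)) ≤
        C ^ 2 * max 1 (1/α) * (1 + |x - y|) * Real.exp (-α * |x - y|) := by
    intro x y hxy
    have habs : |x - y| = y - x := by rw [abs_sub_comm, abs_of_nonneg (by linarith)]
    set w : ℝ → ℝ := fun u => Real.exp (-α * (|x - u| + |y - u|)) with hw
    have h1 : IntegrableOn w (Iic x) := by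
      refine IntegrableOn.congr_fun
        (((my_integrableOn_exp_mul_Iic h2α x).const_mul
          (Real.exp (-α * (x + y))))) ?_ measurableSet_Iic
      intro u hu
      simp only [mem_Iic] at hu
      simp only [hw]
      rw [← Real.exp_add, abs_of_nonneg (by linarith : (0:ℝ) ≤ x - u),
        abs_of_nonneg (by linarith : (0:ℝ) ≤ y - u)]
      ring_nf
    have h2 : IntegrableOn w (Ioc x y) := by
      have : Continuous w := by fun_prop
      exact this.integrableOn_Ioc
    have h3 : IntegrableOn w (Ioi y) := by
      refine IntegrableOn.congr_fun
        (((exp_neg_integrableOn_Ioi y h2α).const_mul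
          (Real.exp (α * (x + y))))) ?_ measurableSet_Ioi
      intro u hu
      simp only [mem_Ioi] at hu
      simp only [hw]
      rw [← Real.exp_add, abs_of_nonpos (by linarith : x - u ≤ 0),
        abs_of_nonpos (by linarith : y - u ≤ 0)]
      ring_nf
    have hIoi : IntegrableOn w (Ioi x) := by
      have := h2.union h3
      rwa [Ioc_union_Ioi_eq_Ioi hxy] at this
    have hw_int : Integrable w := by
      have := h1.union hIoi
      rw [Iic_union_Ioi] at this
      exact integrableOn_univ.mp this
    have I1 : ∫ u in Iic x, w u = Real.exp (-α * (y - x)) / (2 * α) := by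
      have e : ∀ u ∈ Iic x, w u = Real.exp (-α * (x + y)) * Real.exp (2 * α * u) := by
        intro u hu
        simp only [mem_Iic] at hu
        simp only [hw]
        rw [← Real.exp_add, abs_of_nonneg (by linarith : (0:ℝ) ≤ x - u),
          abs_of_nonneg (by linarith : (0:ℝ) ≤ y - u)]
        ring_nf
      rw [setIntegral_congr_fun measurableSet_Iic e, integral_const_mul,
        my_integral_exp_mul_Iic h2α, ← mul_div_assoc, ← Real.exp_add]
      ring_nf
    have I2 : ∫ u in Ioc x y, w u = (y - x) * Real.exp (-α * (y - x)) := by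
      have e : ∀ u ∈ Ioc x y, w u = Real.exp (-α * (y - x)) := by
        intro u hu
        simp only [mem_Ioc] at hu
        simp only [hw]
        rw [abs_of_nonpos (by linarith [hu.1] : x - u ≤ 0),
          abs_of_nonneg (by linarith [hu.2] : (0:ℝ) ≤ y - u)]
        ring_nf
      rw [setIntegral_congr_fun measurableSet_Ioc e, setIntegral_const, smul_eq_mul,
        Real.volume_real_Ioc_of_le hxy]
    have I3 : ∫ u in Ioi y, w u = Real.exp (-α * (y - x)) / (2 * α) := by
      have e : ∀ u ∈ Ioi y, w u = Real.exp (α * (x + y)) * Real.exp (-(2 * α * u)) := by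
        intro u hu
        simp only [mem_Ioi] at hu
        simp only [hw]
        rw [← Real.exp_add, abs_of_nonpos (by linarith : x - u ≤ 0),
          abs_of_nonpos (by linarith : y - u ≤ 0)]
        ring_nf
      have e2 : ∀ u : ℝ, Real.exp (-(2 * α * u)) = Real.exp (-(2 * α) * u) := fun u => by
        ring_nf
      rw [setIntegral_congr_fun measurableSet_Ioi e]
      simp_rw [e2]
      have hvv := my_integral_exp_neg_mul_Ioi h2α y
      simp_rw [neg_mul] at hvv ⊢
      rw [integral_const_mul, hvv, ← mul_div_assoc, ← Real.exp_add]
      ring_nf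
    have Itot : ∫ u, w u = (y - x + 1/α) * Real.exp (-α * (y - x)) := by
      rw [← intervalIntegral.integral_Iic_add_Ioi h1 hIoi, ← Ioc_union_Ioi_eq_Ioi hxy,
        setIntegral_union (Ioc_disjoint_Ioi le_rfl) measurableSet_Ioi h2 h3, I1, I2, I3]
      field_simp
      ring
    have hprod : ∀ u, f (x - u) * f (y - u) ≤ C ^ 2 * w u := by
      intro u
      have b1 := hdecay (x - u)
      have b2 := hdecay (y - u)
      calc f (x - u) * f (y - u)
          ≤ (C * Real.exp (-α * |x - u|)) * (C * Real.exp (-α * |y - u|)) :=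
            mul_le_mul b1 b2 (hpos _) (by positivity)
        _ = C ^ 2 * w u := by
            simp only [hw]
            rw [show -α * (|x - u| + |y - u|) = (-α * |x - u|) + (-α * |y - u|) by ring,
              Real.exp_add]
            ring
    have hmp : MeasurePreserving (fun u : ℝ => x - u) volume volume :=
      Measure.measurePreserving_sub_left volume x
    have hmp' : MeasurePreserving (fun u : ℝ => y - u) volume volume :=
      Measure.measurePreserving_sub_left volume y
    have hmeas : AEStronglyMeasurable (fun u => f (x - u) * f (y - u)) volume :=
      (hint.1.comp_measurePreserving hmp).mul (hint.1.comp_measurePreserving hmp')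
    have hint2 : Integrable (fun u => f (x - u) * f (y - u)) := by
      refine Integrable.mono' (hw_int.const_mul (C ^ 2)) hmeas ?_
      filter_upwards with u
      rw [Real.norm_eq_abs, abs_of_nonneg (mul_nonneg (hpos _) (hpos _))]
      exact hprod u
    calc (∫ u, f (x - u) * f (y - u)) ≤ ∫ u, C ^ 2 * w u :=
          integral_mono hint2 (hw_int.const_mul _) hprod
      _ = C ^ 2 * ((y - x + 1/α) * Real.exp (-α * (y - x))) := by
          rw [integral_const_mul, Itot]
      _ ≤ C ^ 2 * max 1 (1/α) * (1 + |x - y|) * Real.exp (-α * |x - y|) := by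
          rw [habs]
          have hd : 0 ≤ y - x := by linarith
          have hM1 : (1:ℝ) ≤ max 1 (1/α) := le_max_left _ _
          have hM2 : 1/α ≤ max 1 (1/α) := le_max_right _ _
          have key : y - x + 1/α ≤ max 1 (1/α) * (1 + (y - x)) := by nlinarith
          have he : (0:ℝ) < Real.exp (-α * (y - x)) := Real.exp_pos _
          have := mul_le_mul_of_nonneg_right key he.le
          nlinarith [sq_nonneg C, mul_le_mul_of_nonneg_left this (sq_nonneg C)]
  refine ⟨C ^ 2 * max 1 (1/α), by positivity, fun x y => ?_⟩
  rcases le_total x y with hxy | hxy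
  · rw [hK]; exact main x y hxy
  · rw [hK]
    have hcomm : (∫ u, f (x - u) * f (y - u)) = ∫ u, f (y - u) * f (x - u) := by
      congr 1; ext u; ring
    rw [hcomm, abs_sub_comm]
    exact main y x hxy
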